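/- Every characteristic line of the complex sphere intersects the real sphere S² at exactly one point; that is, if z' ∈ S²_ℂ, η ∈ ℂ³ \ {0} satisfy z'·z' = 1, η·η = 0, z'·η = 0, then there is a unique c ∈ ℂ such that z' + cη has all three coordinates real (and then automatically lies on S² ⊂ ℝ³). -/

import Mathlib

/-- Bilinear dot product on ℂ³ (no conjugation). -/
def dot3 (z w : ℂ × ℂ × ℂ) : ℂ := z.1 * w.1 + z.2.1 * w.2.1 + z.2.2 * w.2.2

/-- A point of ℂ³ is real if all three coordinates have zero imaginary part. -/
def isRealPt (z : ℂ × ℂ × ℂ) : Prop := z.1.im = 0 ∧ z.2.1.im = 0 ∧ z.2.2.im = 0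

set_option maxHeartbeats 1600000 in
/-- Every characteristic line of the complex sphere meets the real sphere S² at
exactly one point: there is a unique c with z' + cη real, and this real point
automatically has unit norm. -/
theorem characteristic_line_meets_real_sphere (z' η : ℂ × ℂ × ℂ) (hη : η ≠ 0)
    (hz' : dot3 z' z' = 1) (hηη : dot3 η η = 0) (hz'η : dot3 z' η = 0) :
    (∃! c : ℂ, isRealPt (z' + c • η)) ∧
      (∀ c : ℂ, isRealPt (z' + c • η) →
        ((z' + c • η).1.re) ^ 2 + ((z' + c • η).2.1.re) ^ 2
          + ((z' + c • η).2.2.re) ^ 2 = 1) := by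
  obtain ⟨u1, u2, u3⟩ := z'
  obtain ⟨v1, v2, v3⟩ := η
  simp only [dot3] at hz' hηη hz'η
  have e1 : (u1.re*u1.re + u2.re*u2.re + u3.re*u3.re) - (u1.im*u1.im + u2.im*u2.im + u3.im*u3.im) = 1 := by
    have := congrArg Complex.re hz'
    simp [Complex.mul_re] at this
    ring_nf at this ⊢; linarith
  have e2 : (u1.re*u1.im + u2.re*u2.im + u3.re*u3.im) = 0 := by
    have := congrArg Complex.im hz'
    simp [Complex.mul_im] at this
    ring_nf at this ⊢; linarith
  have e3 : (v1.re*v1.re + v2.re*v2.re + v3.re*v3.re) - (v1.im*v1.im + v2.im*v2.im + v3.im*v3.im) = 0 := by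
    have := congrArg Complex.re hηη
    simp [Complex.mul_re] at this
    ring_nf at this ⊢; linarith
  have e4 : (v1.re*v1.im + v2.re*v2.im + v3.re*v3.im) = 0 := by
    have := congrArg Complex.im hηη
    simp [Complex.mul_im] at this
    ring_nf at this ⊢; linarith
  have e5 : (u1.re*v1.re + u2.re*v2.re + u3.re*v3.re) - (u1.im*v1.im + u2.im*v2.im + u3.im*v3.im) = 0 := by
    have := congrArg Complex.re hz'η
    simp [Complex.mul_re] at this
    ring_nf at this ⊢; linarith
  have e6 : (u1.re*v1.im + u2.re*v2.im + u3.re*v3.im) + (u1.im*v1.re + u2.im*v2.re + u3.im*v3.re) = 0 := by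
    have := congrArg Complex.im hz'η
    simp [Complex.mul_im] at this
    ring_nf at this ⊢; linarith
  have hne : v1.re ≠ 0 ∨ v1.im ≠ 0 ∨ v2.re ≠ 0 ∨ v2.im ≠ 0 ∨ v3.re ≠ 0 ∨ v3.im ≠ 0 := by
    by_contra h
    push_neg at h
    obtain ⟨h1, h2, h3, h4, h5, h6⟩ := h
    exact hη (by simp [Prod.ext_iff, Complex.ext_iff, h1, h2, h3, h4, h5, h6])
  have hr2 : 0 < (v1.re*v1.re + v2.re*v2.re + v3.re*v3.re) := by
    rcases hne with h | h | h | h | h | h <;>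
      nlinarith [e3, mul_self_pos.mpr h, sq_nonneg v1.re, sq_nonneg v2.re, sq_nonneg v3.re,
        sq_nonneg v1.im, sq_nonneg v2.im, sq_nonneg v3.im]
  have hXY : ((u1.re*(v2.re*v3.im - v3.re*v2.im) + u2.re*(v3.re*v1.im - v1.re*v3.im) + u3.re*(v1.re*v2.im - v2.re*v1.im))) * ((u1.im*(v2.re*v3.im - v3.re*v2.im) + u2.im*(v3.re*v1.im - v1.re*v3.im) + u3.im*(v1.re*v2.im - v2.re*v1.im))) = 0 := by
    linear_combination ((v1.re*v1.re + v2.re*v2.re + v3.re*v3.re)*(v1.im*v1.im + v2.im*v2.im + v3.im*v3.im) - (v1.re*v1.im + v2.re*v2.im + v3.re*v3.im)^2) * e2 + (-((u1.im*v1.re + u2.im*v2.re + u3.im*v3.re)*(v1.im*v1.im + v2.im*v2.im + v3.im*v3.im) - (u1.im*v1.im + u2.im*v2.im + u3.im*v3.im)*(v1.re*v1.im + v2.re*v2.im + v3.re*v3.im))) * e5 + ((u1.im*v1.re + u2.im*v2.re + u3.im*v3.re)*(v1.re*v1.im + v2.re*v2.im + v3.re*v3.im) - (u1.im*v1.im +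 u2.im*v2.im + u3.im*v3.im)*(v1.re*v1.re + v2.re*v2.re + v3.re*v3.re)) * e6 + ((u1.im*v1.re + u2.im*v2.re + u3.im*v3.re)*(u1.im*v1.im + u2.im*v2.im + u3.im*v3.im)) * e3 + ((u1.im*v1.im + u2.im*v2.im + u3.im*v3.im)^2 - (u1.im*v1.re + u2.im*v2.re + u3.im*v3.re)^2) * e4
  have hX2 : ((u1.re*(v2.re*v3.im - v3.re*v2.im) + u2.re*(v3.re*v1.im - v1.re*v3.im) + u3.re*(v1.re*v2.im - v2.re*v1.im)))^2 - ((u1.im*(v2.re*v3.im - v3.re*v2.im) + u2.im*(v3.re*v1.im - v1.re*v3.im) + u3.im*(v1.re*v2.im - v2.re*v1.im)))^2 - ((v1.re*v1.re + v2.re*v2.re + v3.re*v3.re))^2 = 0 := by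
    linear_combination ((v1.re*v1.re + v2.re*v2.re + v3.re*v3.re)*(v1.im*v1.im + v2.im*v2.im + v3.im*v3.im) - (v1.re*v1.im + v2.re*v2.im + v3.re*v3.im)^2) * e1 + (-(v1.re*v1.im + v2.re*v2.im + v3.re*v3.im) + 2*(((u1.re*v1.re + u2.re*v2.re + u3.re*v3.re) - (u1.im*v1.im + u2.im*v2.im + u3.im*v3.im))*(((u1.re*v1.im + u2.re*v2.im + u3.re*v3.im) + (u1.im*v1.re + u2.im*v2.re + u3.im*v3.re)) - (u1.im*v1.re + u2.im*v2.re + u3.im*v3.re)) + ((u1.re*v1.im + u2.re*v2.im + u3.re*v3.im) + (u1.im*v1.re + u2.im*v2.re + u3.im*v3.re))*(u1.im*v1.im + u2.im*v2.im + u3.im*v3.im) - 2*(u1.im*v1.re + u2.im*v2.re + u3.im*v3.re)*(u1.im*v1.im + u2.im*v2.im + u3.im*v3.im))) * e4 + (-(v1.im*v1.im + v2.im*v2.im + v3.im*v3.im)*(((u1.re*v1.re + u2.re*v2.re + u3.re*v3.re) - (u1.im*v1.im + u2.im*v2.im + u3.im*v3.im)) + 2*(u1.im*v1.im + u2.im*v2.im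 + u3.im*v3.im))) * e5 + (-(v1.re*v1.re + v2.re*v2.re + v3.re*v3.re)*(((u1.re*v1.im + u2.re*v2.im + u3.re*v3.im) + (u1.im*v1.re + u2.im*v2.re + u3.im*v3.re)) - 2*(u1.im*v1.re + u2.im*v2.re + u3.im*v3.re))) * e6 + (-((u1.im*v1.re + u2.im*v2.re + u3.im*v3.re)^2 - (u1.im*v1.im + u2.im*v2.im + u3.im*v3.im)^2) - (v1.re*v1.re + v2.re*v2.re + v3.re*v3.re)) * e3
  have hY : ((u1.im*(v2.re*v3.im - v3.re*v2.im) + u2.im*(v3.re*v1.im - v1.re*v3.im) + u3.im*(v1.re*v2.im - v2.re*v1.im))) = 0 := by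
    rcases mul_eq_zero.mp hXY with h | h
    · exfalso; rw [h] at hX2; nlinarith [sq_nonneg ((u1.im*(v2.re*v3.im - v3.re*v2.im) + u2.im*(v3.re*v1.im - v1.re*v3.im) + u3.im*(v1.re*v2.im - v2.re*v1.im)))]
    · exact h
  have hk1 : ((v1.re*v1.re + v2.re*v2.re + v3.re*v3.re)) * u1.im - ((u1.im*v1.re + u2.im*v2.re + u3.im*v3.re)) * v1.re - ((u1.im*v1.im + u2.im*v2.im + u3.im*v3.im)) * v1.im = 0 := by
    have hmul : ((v1.re*v1.re + v2.re*v2.re + v3.re*v3.re)) * (((v1.re*v1.re + v2.re*v2.re + v3.re*v3.re)) * u1.im - ((u1.im*v1.re + u2.im*v2.re + u3.im*v3.re)) * v1.re - ((u1.im*v1.im + u2.im*v2.im + u3.im*v3.im)) * v1.im) = 0 := by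
      linear_combination (v2.re*v3.im - v3.re*v2.im) * hY + ((v1.re*v1.re + v2.re*v2.re + v3.re*v3.re)*u1.im - (u1.im*v1.re + u2.im*v2.re + u3.im*v3.re)*v1.re) * e3 + ((v1.re*v1.im + v2.re*v2.im + v3.re*v3.im)*u1.im - (u1.im*v1.im + u2.im*v2.im + u3.im*v3.im)*v1.re - (u1.im*v1.re + u2.im*v2.re + u3.im*v3.re)*v1.im) * e4
    exact (mul_eq_zero.mp hmul).resolve_left hr2.ne' 
  have hk2 : ((v1.re*v1.re + v2.re*v2.re + v3.re*v3.re)) * u2.im - ((u1.im*v1.re + u2.im*v2.re + u3.im*v3.re)) * v2.re - ((u1.im*v1.im + u2.im*v2.im + u3.im*v3.im)) * v2.im = 0 := by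
    have hmul : ((v1.re*v1.re + v2.re*v2.re + v3.re*v3.re)) * (((v1.re*v1.re + v2.re*v2.re + v3.re*v3.re)) * u2.im - ((u1.im*v1.re + u2.im*v2.re + u3.im*v3.re)) * v2.re - ((u1.im*v1.im + u2.im*v2.im + u3.im*v3.im)) * v2.im) = 0 := by
      linear_combination (v3.re*v1.im - v1.re*v3.im) * hY + ((v1.re*v1.re + v2.re*v2.re + v3.re*v3.re)*u2.im - (u1.im*v1.re + u2.im*v2.re + u3.im*v3.re)*v2.re) * e3 + ((v1.re*v1.im + v2.re*v2.im + v3.re*v3.im)*u2.im - (u1.im*v1.im + u2.im*v2.im + u3.im*v3.im)*v2.re - (u1.im*v1.re + u2.im*v2.re + u3.im*v3.re)*v2.im) * e4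
    exact (mul_eq_zero.mp hmul).resolve_left hr2.ne' 
  have hk3 : ((v1.re*v1.re + v2.re*v2.re + v3.re*v3.re)) * u3.im - ((u1.im*v1.re + u2.im*v2.re + u3.im*v3.re)) * v3.re - ((u1.im*v1.im + u2.im*v2.im + u3.im*v3.im)) * v3.im = 0 := by
    have hmul : ((v1.re*v1.re + v2.re*v2.re + v3.re*v3.re)) * (((v1.re*v1.re + v2.re*v2.re + v3.re*v3.re)) * u3.im - ((u1.im*v1.re + u2.im*v2.re + u3.im*v3.re)) * v3.re - ((u1.im*v1.im + u2.im*v2.im + u3.im*v3.im)) * v3.im) = 0 := by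
      linear_combination (v1.re*v2.im - v2.re*v1.im) * hY + ((v1.re*v1.re + v2.re*v2.re + v3.re*v3.re)*u3.im - (u1.im*v1.re + u2.im*v2.re + u3.im*v3.re)*v3.re) * e3 + ((v1.re*v1.im + v2.re*v2.im + v3.re*v3.im)*u3.im - (u1.im*v1.im + u2.im*v2.im + u3.im*v3.im)*v3.re - (u1.im*v1.re + u2.im*v2.re + u3.im*v3.re)*v3.im) * e4
    exact (mul_eq_zero.mp hmul).resolve_left hr2.ne' 
  set c : ℂ := ⟨-((u1.im*v1.im + u2.im*v2.im + u3.im*v3.im)) / ((v1.re*v1.re + v2.re*v2.re + v3.re*v3.re)), -((u1.im*v1.re + u2.im*v2.re + u3.im*v3.re)) / ((v1.re*v1.re + v2.re*v2.re + v3.re*v3.re))⟩ with hc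
  constructor
  · refine ⟨c, ?_, ?_⟩
    · refine ⟨?_, ?_, ?_⟩ <;>
        · simp only [Prod.mk_add_mk, Prod.smul_mk, smul_eq_mul, Complex.add_im,
            Complex.mul_im, hc]
          rw [div_mul_eq_mul_div, div_mul_eq_mul_div, ← add_div, add_div' _ _ _ hr2.ne', div_eq_iff hr2.ne']
          first
          | linear_combination hk1
          | linear_combination hk2
          | linear_combination hk3
    · rintro d ⟨h1, h2, h3⟩
      simp only [Prod.mk_add_mk, Prod.smul_mk, smul_eq_mul, Complex.add_im,
        Complex.mul_im] at h1 h2 h3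
      apply Complex.ext
      · show d.re = -((u1.im*v1.im + u2.im*v2.im + u3.im*v3.im)) / ((v1.re*v1.re + v2.re*v2.re + v3.re*v3.re))
        rw [eq_div_iff hr2.ne']
        linear_combination (v1.im * h1 + v2.im * h2 + v3.im * h3) + d.re * e3 - d.im * e4
      · show d.im = -((u1.im*v1.re + u2.im*v2.re + u3.im*v3.re)) / ((v1.re*v1.re + v2.re*v2.re + v3.re*v3.re))
        rw [eq_div_iff hr2.ne']
        linear_combination (v1.re * h1 + v2.re * h2 + v3.re * h3) - d.re * e4
  · rintro d ⟨h1, h2, h3⟩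
    simp only [Prod.mk_add_mk, Prod.smul_mk, smul_eq_mul, Complex.add_im,
      Complex.mul_im] at h1 h2 h3
    simp only [Prod.mk_add_mk, Prod.smul_mk, smul_eq_mul]
    have hdot : (u1 + d * v1) * (u1 + d * v1) + (u2 + d * v2) * (u2 + d * v2)
        + (u3 + d * v3) * (u3 + d * v3) = 1 := by
      linear_combination hz' + (2 * d) * hz'η + d ^ 2 * hηη
    have hre := congrArg Complex.re hdot
    simp only [Complex.add_re, Complex.add_im, Complex.mul_re, Complex.mul_im,
      Complex.one_re] at hre
    simp only [Complex.add_re, Complex.mul_re]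
    linear_combination hre + (u1.im + (d.re * v1.im + d.im * v1.re)) * h1
      + (u2.im + (d.re * v2.im + d.im * v2.re)) * h2
      + (u3.im + (d.re * v3.im + d.im * v3.re)) * h3
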